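/- arXiv:2505.10385 — 2 statements merged into one kernel-verified Lean document; each statement's English description precedes it below -/
import Mathlib

section
/- (Correctness of the conditional Fork stabilizer test.) Let F be the star graph on four vertices {1,2,3,4} with edges {1,4}, {2,4}, {3,4}, and let |F⟩ be its graph state. For p, q, s ∈ ZMod 2 define |ψ(p,q,s)⟩ = Z₁^p Z₂^q Z₃^s |F⟩, and define the conditional observable O(p,s) = O₁ ⊗ O₂ ⊗ O₃ ⊗ O₄ where O₁ = Z if s = 0 and Y if s = 1; O₂ = Z if p = 0 and Y if p = 1; O₃ = Z if p = 0 and −Y if p = 1; O₄ = X if s = 0 and Y if s = 1. Then O(p,s) |ψ(p,q,s)⟩ = (−1)^{p·q} |ψ(p,q,s)⟩ for all p, q, s; hence measuring the four qubits in these bases yields outcomes m₁, m₂, m₃, m₄ with m₁ ⊕ m₂ ⊕ m₃ ⊕ m₄ = p·q with probability 1. -/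
open Matrix
open scoped BigOperators

noncomputable section

/-- `(-1)^c` as a complex number, for `c : ZMod 2`. -/
def sgn (c : ZMod 2) : ℂ := if c = 0 then 1 else -1

/-- Pauli `X = !![0,1;1,0]`, indexed by `ZMod 2`. -/
def PX : Matrix (ZMod 2) (ZMod 2) ℂ := fun a b => if a = b then 0 else 1

/-- Pauli `Y = !![0,−i;i,0]`, indexed by `ZMod 2`. -/
def PY : Matrix (ZMod 2) (ZMod 2) ℂ :=
  fun a b => if a = b then 0 else if a = 0 then -Complex.I else Complex.I

/-- Pauli `Z = !![1,0;0,−1]`, indexed by `ZMod 2`. -/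
def PZ : Matrix (ZMod 2) (ZMod 2) ℂ := fun a b => if a = b then sgn a else 0

/-- The tensor (Kronecker) product over all qubits of a family of single-qubit
operators: the `(x, y)` entry is `∏ i, (f i) (x i) (y i)`. -/
def tensorOp {V : Type*} [Fintype V] (f : V → Matrix (ZMod 2) (ZMod 2) ℂ) :
    Matrix (V → ZMod 2) (V → ZMod 2) ℂ :=
  fun x y => ∏ i, f i (x i) (y i)

/-- The operator acting as `A` on qubit `i` and as the identity on all other qubits. -/
def localOp {V : Type*} [Fintype V] [DecidableEq V] (i : V)
    (A : Matrix (ZMod 2) (ZMod 2) ℂ) : Matrix (V → ZMod 2) (V → ZMod 2) ℂ :=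
  tensorOp (fun j => if j = i then A else 1)

/-- `Σ_{{i,j} ∈ E(G)} x_i x_j`, as an element of `ZMod 2`. -/
def edgePhase {V : Type*} [Fintype V] [DecidableEq V] (G : SimpleGraph V)
    [DecidableRel G.Adj] (x : V → ZMod 2) : ZMod 2 :=
  ∑ e ∈ G.edgeFinset, Sym2.lift ⟨fun i j => x i * x j, fun _ _ => mul_comm _ _⟩ e

/-- The graph state `|G⟩`, with amplitudes `⟨x|G⟩ = 2^{-n/2}·(−1)^{Σ_{{i,j}∈E(G)} x_i x_j}`. -/
def graphState {V : Type*} [Fintype V] [DecidableEq V] (G : SimpleGraph V)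
    [DecidableRel G.Adj] : (V → ZMod 2) → ℂ :=
  fun x => (Real.sqrt 2 : ℂ)⁻¹ ^ (Fintype.card V) * sgn (edgePhase G x)

/-- The entangling unitary `U_G = ∏_{{i,j} ∈ E(G)} CZ_{i,j}`: the diagonal matrix with
`(x,x)` entry `(−1)^{Σ_{{i,j}∈E(G)} x_i x_j}`. -/
def entangler {V : Type*} [Fintype V] [DecidableEq V] (G : SimpleGraph V)
    [DecidableRel G.Adj] : Matrix (V → ZMod 2) (V → ZMod 2) ℂ :=
  Matrix.diagonal (fun x => sgn (edgePhase G x))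

/-- The correlation operator `K_i = X_i ∏_{j ∈ N(i)} Z_j`. -/
def corrOp {V : Type*} [Fintype V] [DecidableEq V] (G : SimpleGraph V)
    [DecidableRel G.Adj] (i : V) : Matrix (V → ZMod 2) (V → ZMod 2) ℂ :=
  tensorOp (fun j => if j = i then PX else if G.Adj i j then PZ else 1)

/-- `Z^r = ∏_i Z_i^{r_i}` for `r ∈ (ZMod 2)^V`. -/
def Zop {V : Type*} [Fintype V] (r : V → ZMod 2) :
    Matrix (V → ZMod 2) (V → ZMod 2) ℂ :=
  tensorOp (fun i => PZ ^ (r i).val)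

/-- The rank-one outer product `|ψ⟩⟨ψ|`. -/
def outer {α : Type*} (ψ : α → ℂ) : Matrix α α ℂ := fun x y => ψ x * star (ψ y)


/-- The star graph on four vertices with center `3` (modeling the Fork region,
qubits 9,10,11,12 with center 12): edges `{0,3}, {1,3}, {2,3}`. -/
def forkGraph : SimpleGraph (Fin 4) := SimpleGraph.fromRel (fun _ j => j = 3)

instance : DecidableRel forkGraph.Adj := fun a b =>
  inferInstanceAs (Decidable (a ≠ b ∧ (b = 3 ∨ a = 3)))


lemma zmod2_cases : ∀ a : ZMod 2, a = 0 ∨ a = 1 := by decide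

lemma sum_zmod2 {M : Type*} [AddCommMonoid M] (g : ZMod 2 → M) : ∑ a, g a = g 0 + g 1 :=
  Fin.sum_univ_two g

lemma pack_bij : Function.Bijective
    (fun z : ZMod 2 × ZMod 2 × ZMod 2 × ZMod 2 => (![z.1, z.2.1, z.2.2.1, z.2.2.2] : Fin 4 → ZMod 2)) := by
  decide

lemma sum_pi4 {M : Type*} [AddCommMonoid M] (g : (Fin 4 → ZMod 2) → M) :
    ∑ y, g y = ∑ a, ∑ b, ∑ c, ∑ d, g ![a, b, c, d] := by
  rw [← Fintype.sum_bijective _ pack_bij _ g (fun z => rfl)]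
  rw [Fintype.sum_prod_type]
  simp only [Fintype.sum_prod_type]

lemma edgePhase_fork : ∀ x : Fin 4 → ZMod 2,
    edgePhase forkGraph x = x 0 * x 3 + x 1 * x 3 + x 2 * x 3 := by decide

lemma PZ_pow_apply (c a b : ZMod 2) : (PZ ^ c.val) a b = if a = b then sgn (c * a) else 0 := by
  rcases zmod2_cases c with hc | hc <;> subst hc <;>
  rcases zmod2_cases a with ha | ha <;> subst ha <;>
  rcases zmod2_cases b with hb | hb <;> subst hb <;>
  simp [PZ, sgn, Matrix.one_apply, ZMod.val_one, pow_one]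

lemma Zop_apply {V : Type*} [Fintype V] [DecidableEq V] (r : V → ZMod 2)
    (v : (V → ZMod 2) → ℂ) (y : V → ZMod 2) :
    (Zop r).mulVec v y = (∏ i, sgn (r i * y i)) * v y := by
  have hd : ∀ z, Zop r y z = if y = z then ∏ i, sgn (r i * y i) else 0 := by
    intro z
    by_cases h : y = z
    · subst h; simp [Zop, tensorOp, PZ_pow_apply]
    · obtain ⟨i, hi⟩ := Function.ne_iff.mp h
      simp only [Zop, tensorOp]
      rw [if_neg h]
      exact Finset.prod_eq_zero (f := fun j => (PZ ^ (r j).val) (y j) (z j))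
        (Finset.mem_univ i) (by show (PZ ^ (r i).val) (y i) (z i) = 0; rw [PZ_pow_apply, if_neg hi])
  simp only [Matrix.mulVec, dotProduct, hd, ite_mul, zero_mul]
  simp

set_option maxHeartbeats 4000000 in

/-- Correctness of the conditional Fork stabilizer test: for the
phase-encoded star graph state `|ψ(p,q,s)⟩ = Z₁^p Z₂^q Z₃^s |F⟩`, the conditional
observable `O(p,s)` (with `O₁ = Z/Y` by `s`, `O₂ = Z/Y` by `p`, `O₃ = Z/(−Y)` by `p`,
`O₄ = X/Y` by `s`) satisfies `O(p,s)|ψ(p,q,s)⟩ = (−1)^{p·q} |ψ(p,q,s)⟩`; hence the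
measurement outcomes satisfy `m₁ ⊕ m₂ ⊕ m₃ ⊕ m₄ = p·q` with probability 1. -/
theorem fork_stabilizer_test (p q s : ZMod 2) :
    (tensorOp ![if s = 0 then PZ else PY,
                if p = 0 then PZ else PY,
                if p = 0 then PZ else -PY,
                if s = 0 then PX else PY]).mulVec
        ((Zop ![p, q, s, 0]).mulVec (graphState forkGraph))
      = sgn (p * q) • ((Zop ![p, q, s, 0]).mulVec (graphState forkGraph)) := by
  have hZ : (Zop ![p, q, s, 0]).mulVec (graphState forkGraph)
      = fun y => (∏ i, sgn ((![p, q, s, 0] : Fin 4 → ZMod 2) i * y i)) * graphState forkGraph y :=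
    funext fun y => Zop_apply _ _ y
  rw [hZ]
  funext x
  simp only [Matrix.mulVec, dotProduct, Pi.smul_apply, smul_eq_mul]
  rw [sum_pi4]
  simp only [sum_zmod2, tensorOp, graphState, edgePhase_fork, Fin.prod_univ_four,
    Matrix.cons_val_zero, Matrix.cons_val_one, Matrix.head_cons, Matrix.cons_val_two,
    Matrix.tail_cons, Matrix.cons_val_three]
  rcases zmod2_cases p with hp | hp <;> subst hp <;>
  rcases zmod2_cases q with hq | hq <;> subst hq <;>
  rcases zmod2_cases s with hs | hs <;> subst hs <;>
  rcases zmod2_cases (x 0) with h0 | h0 <;>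
  rcases zmod2_cases (x 1) with h1 | h1 <;>
  rcases zmod2_cases (x 2) with h2 | h2 <;>
  rcases zmod2_cases (x 3) with h3 | h3 <;>
  · simp [h0, h1, h2, h3, PX, PY, PZ, sgn,
      show (1+1:ZMod 2)=0 by decide, show (1:ZMod 2)≠0 by decide,
      show ((0:ZMod 2)=0) by rfl]
    try ring_nf
end
end

section
/- (Z-measurement rule for phase-encoded graph states.) Let G be a finite simple graph on Fin n, let i be a vertex, r ∈ (ZMod 2)^n, and m ∈ ZMod 2. Then contracting qubit i of Z^r|G⟩ against the standard basis vector e_m yields exactly ⟨m|_i (Z^r|G⟩) = 2^{−1/2} · (−1)^{r_i·m} · (∏_{j ∈ N(i)} Z_j^{m}) · Z^{r'} |G − i⟩, where G − i is the induced subgraph of G on the remaining n−1 vertices, r' is the restriction of r to those vertices, and the Z operators act on the (n−1)-qubit space. -/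
open Matrix
open scoped BigOperators

noncomputable section

/-- The induced subgraph `G − i` on the remaining vertices. -/
def deleteVertex {n : ℕ} (G : SimpleGraph (Fin n)) (i : Fin n) :
    SimpleGraph {j : Fin n // j ≠ i} :=
  G.comap Subtype.val

instance {n : ℕ} (G : SimpleGraph (Fin n)) [h : DecidableRel G.Adj] (i : Fin n) :
    DecidableRel (deleteVertex G i).Adj := fun a b => h a.val b.val

lemma sgn_add (a b : ZMod 2) : sgn (a + b) = sgn a * sgn b := by
  fin_cases a <;> fin_cases b
  · change sgn ((0 : ZMod 2) + 0) = sgn 0 * sgn 0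
    simp [sgn, show (1 + 1 : ZMod 2) = 0 from rfl]
  · change sgn ((0 : ZMod 2) + 1) = sgn 0 * sgn 1
    simp [sgn, show (1 + 1 : ZMod 2) = 0 from rfl]
  · change sgn ((1 : ZMod 2) + 0) = sgn 1 * sgn 0
    simp [sgn, show (1 + 1 : ZMod 2) = 0 from rfl]
  · change sgn ((1 : ZMod 2) + 1) = sgn 1 * sgn 1
    simp [sgn, show (1 + 1 : ZMod 2) = 0 from rfl]

lemma sgn_sum {ι : Type*} (s : Finset ι) (f : ι → ZMod 2) :
    sgn (∑ j ∈ s, f j) = ∏ j ∈ s, sgn (f j) := by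
  induction s using Finset.cons_induction with
  | empty => simp [sgn]
  | cons a s ha ih => simp [Finset.sum_cons, Finset.prod_cons, sgn_add, ih]

lemma PZpow_apply (v a b : ZMod 2) :
    (PZ ^ v.val) a b = if a = b then sgn (v * a) else 0 := by
  fin_cases v
  · change (PZ ^ ZMod.val (0 : ZMod 2)) a b = if a = b then sgn ((0 : ZMod 2) * a) else 0
    simp [pow_zero, Matrix.one_apply, sgn]
  · change (PZ ^ ZMod.val (1 : ZMod 2)) a b = if a = b then sgn ((1 : ZMod 2) * a) else 0
    simp [pow_one, PZ, ZMod.val_one]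

lemma Zop_eq_diagonal {V : Type*} [Fintype V] [DecidableEq V] (r : V → ZMod 2) :
    Zop r = Matrix.diagonal (fun x => sgn (∑ j, r j * x j)) := by
  ext x y
  by_cases h : x = y
  · subst h
    simp [Zop, tensorOp, Matrix.diagonal_apply_eq, PZpow_apply, sgn_sum]
  · obtain ⟨j, hj⟩ := Function.ne_iff.mp h
    rw [Matrix.diagonal_apply_ne _ h]
    exact Finset.prod_eq_zero (Finset.mem_univ j) (by simp [PZpow_apply, hj])

lemma edgePhase_split {n : ℕ} (G : SimpleGraph (Fin n)) [DecidableRel G.Adj]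
    (i : Fin n) (m : ZMod 2) (y : {j : Fin n // j ≠ i} → ZMod 2) :
    edgePhase G (fun j => if h : j = i then m else y ⟨j, h⟩)
      = (∑ j : {j : Fin n // j ≠ i}, (if G.Adj i j.val then m else 0) * y j)
        + edgePhase (deleteVertex G i) y := by
  classical
  set X : Fin n → ZMod 2 := fun j => if h : j = i then m else y ⟨j, h⟩ with hX
  have hXi : X i = m := by simp [hX]
  have hXj : ∀ (j : Fin n) (h : j ≠ i), X j = y ⟨j, h⟩ := fun j h => by simp [hX, h]
  unfold edgePhase
  rw [← Finset.sum_filter_add_sum_filter_not G.edgeFinset (fun e => i ∈ e)]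
  congr 1
  · -- incident edges
    have h1 : (∑ j : {j : Fin n // j ≠ i}, (if G.Adj i j.val then m else 0) * y j)
        = ∑ j ∈ Finset.univ.filter (fun j : {j : Fin n // j ≠ i} => G.Adj i j.val),
            m * y j := by
      rw [Finset.sum_filter]
      exact Finset.sum_congr rfl (fun j _ => by split <;> simp
        )
    rw [h1]
    refine (Finset.sum_nbij (fun j => s(i, j.val)) ?_ ?_ ?_ ?_).symm
    · intro a ha
      simp only [Finset.mem_filter, Finset.mem_univ, true_and] at ha ⊢
      simp [SimpleGraph.mem_edgeFinset, ha]
    · intro a ha b hb hab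
      simp only [Sym2.congr_right] at hab
      exact Subtype.ext hab
    · intro e he
      simp only [Finset.coe_filter, Set.mem_setOf_eq, Finset.mem_univ, true_and,
        SimpleGraph.mem_edgeFinset] at he
      obtain ⟨he1, he2⟩ := he
      obtain ⟨j, rfl⟩ := Sym2.mem_iff_exists.mp he2
      have hadj : G.Adj i j := (SimpleGraph.mem_edgeSet G).mp he1
      exact ⟨⟨j, hadj.ne'⟩, by simp [hadj], rfl⟩
    · intro a ha
      simp only [Finset.mem_filter, Finset.mem_univ, true_and] at ha
      simp [Sym2.lift_mk, hXi, hXj a.val a.prop]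
  · -- non-incident edges
    refine (Finset.sum_nbij (Sym2.map Subtype.val) ?_ ?_ ?_ ?_).symm
    · intro e he
      induction e using Sym2.ind with
      | _ a b =>
        simp only [SimpleGraph.mem_edgeFinset, SimpleGraph.mem_edgeSet] at he
        simp only [Sym2.map_pair_eq, Finset.mem_filter, SimpleGraph.mem_edgeFinset,
          SimpleGraph.mem_edgeSet, Sym2.mem_iff]
        exact ⟨he, by push_neg; exact ⟨(a.prop ∘ Eq.symm), (b.prop ∘ Eq.symm)⟩⟩
    · exact (Sym2.map.injective Subtype.val_injective).injOn
    · intro e he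
      simp only [Finset.coe_filter, Set.mem_setOf_eq, SimpleGraph.mem_edgeFinset] at he
      obtain ⟨he1, he2⟩ := he
      induction e using Sym2.ind with
      | _ a b =>
        rw [SimpleGraph.mem_edgeSet] at he1
        rw [Sym2.mem_iff] at he2
        push_neg at he2
        refine ⟨s(⟨a, fun h => he2.1 h.symm⟩, ⟨b, fun h => he2.2 h.symm⟩), ?_, rfl⟩
        simp only [Finset.mem_coe, SimpleGraph.mem_edgeFinset, SimpleGraph.mem_edgeSet]
        exact he1
    · intro e he
      induction e using Sym2.ind with
      | _ a b =>
        simp [Sym2.lift_mk, Sym2.map_pair_eq, hXj a.val a.prop, hXj b.val b.prop]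


/-- Z-measurement rule for phase-encoded graph states: contracting
qubit `i` of `Z^r|G⟩` against the standard basis vector `e_m` yields
`⟨m|_i (Z^r|G⟩) = 2^{−1/2} · (−1)^{r_i·m} · (∏_{j ∈ N(i)} Z_j^m) · Z^{r'} |G − i⟩`,
where `r'` is the restriction of `r` to the remaining vertices. -/
theorem z_measurement_rule {n : ℕ} (G : SimpleGraph (Fin n)) [DecidableRel G.Adj]
    (i : Fin n) (r : Fin n → ZMod 2) (m : ZMod 2) :
    (fun y : {j : Fin n // j ≠ i} → ZMod 2 =>
        (Zop r).mulVec (graphState G) (fun j => if h : j = i then m else y ⟨j, h⟩))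
      = (Real.sqrt 2 : ℂ)⁻¹ • sgn (r i * m) •
          ((Zop (fun j : {j : Fin n // j ≠ i} => if G.Adj i j.val then m else 0) *
            Zop (fun j : {j : Fin n // j ≠ i} => r j.val)).mulVec
              (graphState (deleteVertex G i))) := by
  classical
  funext y
  set X : Fin n → ZMod 2 := fun j => if h : j = i then m else y ⟨j, h⟩ with hX
  have hXi : X i = m := by simp [hX]
  have hXj : ∀ (j : Fin n) (h : j ≠ i), X j = y ⟨j, h⟩ := fun j h => by simp [hX, h]
  have hcard : Fintype.card {j : Fin n // j ≠ i} = n - 1 := by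
    rw [Fintype.card_subtype_compl, Fintype.card_subtype_eq, Fintype.card_fin]
  have hn : n - 1 + 1 = n := Nat.succ_pred_eq_of_pos i.pos
  have hA : (∑ j, r j * X j)
      = r i * m + ∑ j : {j : Fin n // j ≠ i}, r j.val * y j := by
    rw [← Finset.add_sum_erase _ _ (Finset.mem_univ i), hXi]
    congr 1
    rw [Finset.sum_subtype (p := fun j => j ≠ i) (Finset.univ.erase i)
      (fun x => by simp [Finset.mem_erase]) (fun j => r j * X j)]
    exact Finset.sum_congr rfl (fun j _ => by rw [hXj j.val j.prop])
  have hE := edgePhase_split G i m y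
  rw [← hX] at hE
  rw [Zop_eq_diagonal, Zop_eq_diagonal, Zop_eq_diagonal, Matrix.diagonal_mul_diagonal]
  simp only [Pi.smul_apply, Matrix.mulVec_diagonal, smul_eq_mul]
  simp only [graphState, hcard, Fintype.card_fin]
  have hpow : ((Real.sqrt 2 : ℂ))⁻¹ ^ n
      = (Real.sqrt 2 : ℂ)⁻¹ ^ (n - 1) * (Real.sqrt 2 : ℂ)⁻¹ := by
    rw [← pow_succ, hn]
  rw [hA, hE, sgn_add, sgn_add, hpow]
  ring
end
end
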